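/- If P_1, ..., P_K are p-values (possibly dependent), then P(2·(1/K)∑_{k=1}^K P_k ≤ ε) ≤ ε for all ε ∈ (0,1]; that is, twice the arithmetic mean of arbitrary p-values is a p-value. -/

import Mathlib

open MeasureTheory

/-- Auxiliary: lower bound for the integral of a truncated p-value. -/
lemma pvalue_trunc_integral_lb
    {Ω : Type*} [MeasurableSpace Ω] (μ : Measure Ω) [IsProbabilityMeasure μ]
    (f : Ω → ℝ) (hf : Measurable f) (hnn : ∀ ω, 0 ≤ f ω)
    (hp : ∀ ε ∈ Set.Ioc (0 : ℝ) 1, (μ {ω | f ω ≤ ε}).toReal ≤ ε)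
    {ε : ℝ} (hε0 : 0 < ε) (hε1 : ε ≤ 1) :
    ε - ε ^ 2 / 2 ≤ ∫ ω, min (f ω) ε ∂μ := by
  set g : Ω → ℝ := fun ω => min (f ω) ε with hg
  have hgmeas : Measurable g := hf.min measurable_const
  have hgnn : ∀ ω, 0 ≤ g ω := fun ω => le_min (hnn ω) hε0.le
  have hgle : ∀ ω, g ω ≤ ε := fun ω => min_le_right _ _
  have hgint : Integrable g μ := by
    refine Integrable.mono' (integrable_const ε) hgmeas.aestronglyMeasurable ?_
    exact Filter.Eventually.of_forall fun ω => by
      rw [Real.norm_eq_abs, abs_of_nonneg (hgnn ω)]; exact hgle ω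
  have key := hgint.integral_eq_integral_Ioc_meas_le
    (Filter.Eventually.of_forall hgnn) (Filter.Eventually.of_forall hgle)
  rw [key]
  -- the layercake integrand
  set F : ℝ → ℝ := fun t => (μ {a | t ≤ g a}).toReal with hF
  have hFmeas : Measurable F := by
    refine Measurable.ennreal_toReal ?_
    exact Antitone.measurable (fun _ _ hst => measure_mono (fun _ h => le_trans hst h))
  have hFint : IntegrableOn F (Set.Ioc 0 ε) := by
    refine Integrable.mono' (integrable_const 1) hFmeas.aestronglyMeasurable ?_
    refine Filter.Eventually.of_forall fun t => ?_
    rw [Real.norm_eq_abs, abs_of_nonneg ENNReal.toReal_nonneg]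
    exact ENNReal.toReal_le_of_le_ofReal zero_le_one (by simp [prob_le_one])
  have hpt : ∀ t ∈ Set.Ioc 0 ε, 1 - t ≤ F t := by
    intro t ht
    have ht1 : t ∈ Set.Ioc (0 : ℝ) 1 := ⟨ht.1, ht.2.trans hε1⟩
    have hset : {a | t ≤ g a} = {a | f a ≤ t}ᶜ ∪ {a | f a = t} := by
      ext a
      simp only [Set.mem_setOf_eq, Set.mem_union, Set.mem_compl_iff, hg, le_min_iff]
      constructor
      · rintro ⟨h1, _⟩
        rcases eq_or_lt_of_le h1 with h | h
        · exact Or.inr h.symm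
        · exact Or.inl (not_le.mpr h)
      · rintro (h | h)
        · exact ⟨(not_le.mp h).le, ht.2⟩
        · exact ⟨h.ge, ht.2⟩
    have hsub : {a | f a ≤ t}ᶜ ⊆ {a | t ≤ g a} := by
      rw [hset]; exact Set.subset_union_left
    have hmeasset : MeasurableSet {a | f a ≤ t} := hf measurableSet_Iic
    have h1 : μ {a | f a ≤ t}ᶜ ≤ μ {a | t ≤ g a} := measure_mono hsub
    have h2 : (μ {a | f a ≤ t}ᶜ).toReal = 1 - (μ {a | f a ≤ t}).toReal := by
      rw [measure_compl hmeasset (measure_ne_top μ _), measure_univ,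
        ENNReal.toReal_sub_of_le prob_le_one ENNReal.one_ne_top]
      simp
    have h3 : (μ {a | f a ≤ t}).toReal ≤ t := hp t ht1
    calc 1 - t ≤ 1 - (μ {a | f a ≤ t}).toReal := by linarith
      _ = (μ {a | f a ≤ t}ᶜ).toReal := h2.symm
      _ ≤ F t := ENNReal.toReal_mono (measure_ne_top μ _) h1
  have hlin : ∫ t in Set.Ioc (0:ℝ) ε, (1 - t) = ε - ε ^ 2 / 2 := by
    rw [← intervalIntegral.integral_of_le hε0.le]
    simp [intervalIntegral.integral_sub intervalIntegrable_const intervalIntegral.intervalIntegrable_id]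
  calc ε - ε ^ 2 / 2 = ∫ t in Set.Ioc (0:ℝ) ε, (1 - t) := hlin.symm
    _ ≤ ∫ t in Set.Ioc (0:ℝ) ε, F t := by
        refine setIntegral_mono_on ?_ hFint measurableSet_Ioc hpt
        exact (continuous_const.sub continuous_id).integrableOn_Ioc

/-- Rüschendorf's result: twice the arithmetic mean of arbitrary (possibly
dependent) p-values is a p-value. -/
theorem twice_arith_mean_of_pvalues_is_pvalue
    {Ω : Type*} [MeasurableSpace Ω] (μ : Measure Ω) [IsProbabilityMeasure μ]
    (K : ℕ) (hK : 1 ≤ K) (P : Fin K → Ω → ℝ)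
    (hmeas : ∀ k, Measurable (P k))
    (hnonneg : ∀ k ω, 0 ≤ P k ω)
    (hpval : ∀ k, ∀ ε ∈ Set.Ioc (0 : ℝ) 1, (μ {ω | P k ω ≤ ε}).toReal ≤ ε) :
    ∀ ε ∈ Set.Ioc (0 : ℝ) 1,
      (μ {ω | 2 * ((1 / (K : ℝ)) * ∑ k, P k ω) ≤ ε}).toReal ≤ ε := by
  rintro ε ⟨hε0, hε1⟩
  have hKpos : (0 : ℝ) < K := by exact_mod_cast hK
  set h : Ω → ℝ := fun ω => (1 / (K : ℝ)) * ∑ k, min (P k ω) ε with hh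
  set A : Set Ω := {ω | 2 * ((1 / (K : ℝ)) * ∑ k, P k ω) ≤ ε} with hA
  have hAmeas : MeasurableSet A := by
    apply measurableSet_le
    · exact (measurable_const.mul ((Finset.measurable_sum _
        (fun k _ => hmeas k)).const_mul _))
    · exact measurable_const
  -- integrability of each truncated p-value and of h
  have hgint : ∀ k : Fin K, Integrable (fun ω => min (P k ω) ε) μ := by
    intro k
    refine Integrable.mono' (integrable_const ε) ((hmeas k).min measurable_const).aestronglyMeasurable ?_
    refine Filter.Eventually.of_forall fun ω => ?_
    rw [Real.norm_eq_abs, abs_of_nonneg (le_min (hnonneg k ω) hε0.le)]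
    exact min_le_right _ _
  have hhint : Integrable h μ := by
    exact (integrable_finset_sum Finset.univ (fun k _ => hgint k)).const_mul _
  -- lower bound on ∫ h
  have hlb : ε - ε ^ 2 / 2 ≤ ∫ ω, h ω ∂μ := by
    have : ∫ ω, h ω ∂μ = (1 / (K : ℝ)) * ∑ k, ∫ ω, min (P k ω) ε ∂μ := by
      rw [hh]
      simp only [integral_const_mul]
      rw [integral_finset_sum Finset.univ (fun k _ => hgint k)]
    rw [this]
    have hsum : (K : ℝ) * (ε - ε ^ 2 / 2) ≤ ∑ k, ∫ ω, min (P k ω) ε ∂μ := by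
      calc (K : ℝ) * (ε - ε ^ 2 / 2) = ∑ _k : Fin K, (ε - ε ^ 2 / 2) := by
            simp [mul_comm]; ring
        _ ≤ _ := Finset.sum_le_sum (fun k _ =>
            pvalue_trunc_integral_lb μ (P k) (hmeas k) (hnonneg k) (hpval k) hε0 hε1)
    calc ε - ε ^ 2 / 2 = (1 / (K : ℝ)) * ((K : ℝ) * (ε - ε ^ 2 / 2)) := by
          field_simp
      _ ≤ (1 / (K : ℝ)) * ∑ k, ∫ ω, min (P k ω) ε ∂μ := by
          apply mul_le_mul_of_nonneg_left hsum
          positivity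
  -- upper bound on ∫ h
  have hub : ∫ ω, h ω ∂μ ≤ ε - ε / 2 * (μ A).toReal := by
    have hsplit : ∫ ω, h ω ∂μ = ∫ ω in A, h ω ∂μ + ∫ ω in Aᶜ, h ω ∂μ :=
      (integral_add_compl hAmeas hhint).symm
    have hbd1 : ∫ ω in A, h ω ∂μ ≤ (μ A).toReal * (ε / 2) := by
      have : ∫ ω in A, h ω ∂μ ≤ ∫ _ω in A, (ε / 2) ∂μ := by
        refine setIntegral_mono_on hhint.integrableOn (integrableOn_const
          (measure_lt_top μ A).ne) hAmeas ?_
        intro ω hω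
        have h1 : h ω ≤ (1 / (K : ℝ)) * ∑ k, P k ω := by
          apply mul_le_mul_of_nonneg_left _ (by positivity)
          exact Finset.sum_le_sum (fun k _ => min_le_left _ _)
        have h2 : 2 * ((1 / (K : ℝ)) * ∑ k, P k ω) ≤ ε := hω
        linarith
      simpa [setIntegral_const, smul_eq_mul, Measure.real] using this
    have hbd2 : ∫ ω in Aᶜ, h ω ∂μ ≤ (μ Aᶜ).toReal * ε := by
      have : ∫ ω in Aᶜ, h ω ∂μ ≤ ∫ _ω in Aᶜ, ε ∂μ := by
        refine setIntegral_mono_on hhint.integrableOn (integrableOn_const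
          (measure_lt_top μ _).ne) hAmeas.compl ?_
        intro ω _
        have h1 : ∑ k, min (P k ω) ε ≤ ∑ _k : Fin K, ε :=
          Finset.sum_le_sum (fun k _ => min_le_right _ _)
        simp only [Finset.sum_const, Finset.card_univ, Fintype.card_fin, nsmul_eq_mul] at h1
        calc h ω ≤ (1 / (K : ℝ)) * ((K : ℝ) * ε) :=
              mul_le_mul_of_nonneg_left h1 (by positivity)
          _ = ε := by field_simp
      simpa [setIntegral_const, smul_eq_mul, Measure.real] using this
    have hcompl : (μ Aᶜ).toReal = 1 - (μ A).toReal := by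
      rw [measure_compl hAmeas (measure_ne_top μ _), measure_univ,
        ENNReal.toReal_sub_of_le prob_le_one ENNReal.one_ne_top]
      simp
    rw [hsplit]
    calc ∫ ω in A, h ω ∂μ + ∫ ω in Aᶜ, h ω ∂μ
        ≤ (μ A).toReal * (ε / 2) + (μ Aᶜ).toReal * ε := add_le_add hbd1 hbd2
      _ = ε - ε / 2 * (μ A).toReal := by rw [hcompl]; ring
  -- combine
  have hfin : ε / 2 * (μ A).toReal ≤ ε ^ 2 / 2 := by linarith
  have : (μ A).toReal ≤ ε := by
    nlinarith [ENNReal.toReal_nonneg (a := μ A)]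
  exact this
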